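/- Let A be a complete Noetherian local ring with maximal ideal 𝔪. If N is a pure submodule of ∏_{i∈I} A (a product of copies of A), then for every 𝔪-adically complete A-module M, the natural map N ⊗_A M → (N ⊗_A M)̂ to the 𝔪-adic completion is injective. -/

import Mathlib

universe u

open TensorProduct IsLocalRing

section Aux

variable {A : Type*} [CommRing A]

/-- Naturality of `piScalarRightHom`. -/
lemma piScalarRightHom_naturality {P Q : Type*} [AddCommGroup P] [AddCommGroup Q]
    [Module A P] [Module A Q] (ι : Type*) (f : P →ₗ[A] Q) (x : P ⊗[A] (ι → A)) (i : ι) :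
    TensorProduct.piScalarRightHom A A Q ι (f.rTensor (ι → A) x) i
      = f (TensorProduct.piScalarRightHom A A P ι x i) := by
  induction x with
  | zero => simp
  | tmul p v => simp
  | add a b ha hb => simp [ha, hb]

/-- The swap linear equivalence between iterated pi types. -/
def piSwapLinear (κ ι : Type*) : (κ → ι → A) ≃ₗ[A] (ι → κ → A) where
  toFun f i k := f k i
  invFun f k i := f i k
  left_inv _ := rfl
  right_inv _ := rfl
  map_add' _ _ := rfl
  map_smul' _ _ := rfl

@[simp] lemma piSwapLinear_apply (κ ι : Type*) (f : κ → ι → A) (i : ι) (k : κ) :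
    piSwapLinear κ ι f i k = f k i := rfl

set_option synthInstance.maxHeartbeats 400000 in
/-- The free finite case: `piScalarRightHom` is bijective. -/
lemma piScalarRightHom_bijective_free (κ ι : Type*) [Fintype κ] [DecidableEq κ] :
    Function.Bijective (TensorProduct.piScalarRightHom A A (κ → A) ι) := by
  set e : ((κ → A) ⊗[A] (ι → A)) ≃ₗ[A] (ι → κ → A) :=
    (TensorProduct.comm A (κ → A) (ι → A)) ≪≫ₗ
      (TensorProduct.piRight A A (ι → A) (fun _ : κ => A)) ≪≫ₗ
      (LinearEquiv.piCongrRight fun _ : κ => TensorProduct.rid A (ι → A)) ≪≫ₗ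
      piSwapLinear κ ι with he0
  have he : ⇑(TensorProduct.piScalarRightHom A A (κ → A) ι) = ⇑e.toLinearMap := by
    funext x
    induction x with
    | zero => rw [map_zero, map_zero]
    | tmul f v =>
      funext i k
      simp [he0, TensorProduct.rid_tmul, mul_comm]
    | add a b ha hb => rw [map_add, map_add, ha, hb]
  rw [he]
  exact e.bijective

/-- Finitely generated over Noetherian: injectivity of `piScalarRightHom`. -/
lemma piScalarRightHom_injective_of_finite [IsNoetherianRing A] (P : Type*) [AddCommGroup P]
    [Module A P] [Module.Finite A P] (ι : Type*) :
    Function.Injective (TensorProduct.piScalarRightHom A A P ι) := by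
  obtain ⟨n, p, hp⟩ := Module.Finite.exists_fin' A P
  have : Module.Finite A (LinearMap.ker p) := by
    rw [Module.Finite.iff_fg]
    exact IsNoetherian.noetherian _
  obtain ⟨m, q, hq⟩ := Module.Finite.exists_fin' A (LinearMap.ker p)
  set d : (Fin m → A) →ₗ[A] (Fin n → A) := (LinearMap.ker p).subtype ∘ₗ q
  have hpd : p ∘ₗ d = 0 :=
    LinearMap.ext fun v => LinearMap.mem_ker.mp (q v).2
  rw [injective_iff_map_eq_zero]
  intro x hx
  obtain ⟨y, rfl⟩ := LinearMap.rTensor_surjective (ι → A) hp x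
  -- components of the image of y lie in ker p = range d
  have hker : ∀ i, TensorProduct.piScalarRightHom A A (Fin n → A) ι y i ∈ LinearMap.range d := by
    intro i
    have h1 : p (TensorProduct.piScalarRightHom A A (Fin n → A) ι y i) = 0 := by
      rw [← piScalarRightHom_naturality ι p y i, hx]
      rfl
    have h2 : LinearMap.range d = LinearMap.ker p := by
      rw [LinearMap.range_comp, LinearMap.range_eq_top.mpr hq, Submodule.map_top,
        Submodule.range_subtype]
    rw [h2]
    exact h1
  choose ev hev using hker
  obtain ⟨w, hw⟩ := (piScalarRightHom_bijective_free (Fin m) ι).2 ev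
  have hyw : d.rTensor (ι → A) w = y := by
    apply (piScalarRightHom_bijective_free (Fin n) ι).1
    funext i
    rw [piScalarRightHom_naturality ι d w i, hw]
    exact hev i
  rw [← hyw, ← LinearMap.rTensor_comp_apply, hpd, LinearMap.rTensor_zero, LinearMap.zero_apply]

/-- linear images preserve membership in `I • ⊤`. -/
lemma mem_smul_top_map {P Q : Type*} [AddCommGroup P] [AddCommGroup Q] [Module A P] [Module A Q]
    (f : P →ₗ[A] Q) {I : Ideal A} {x : P} (h : x ∈ I • (⊤ : Submodule A P)) :
    f x ∈ I • (⊤ : Submodule A Q) := by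
  have := Submodule.mem_map_of_mem (f := f) h
  rw [Submodule.map_smul''] at this
  exact (smul_mono_right I (le_top : Submodule.map f ⊤ ≤ ⊤)) this

end Aux

set_option maxHeartbeats 1000000 in
/-- Let `A` be a complete Noetherian local ring with maximal ideal `𝔪`.  If `N` is a pure
submodule of a product `∏_{i ∈ ι} A`, then for every `𝔪`-adically complete `A`-module `M`,
the natural map `N ⊗_A M → (N ⊗_A M)^∧` to the `𝔪`-adic completion is injective. -/
theorem tensor_completion_injective_of_pure {A : Type u} [CommRing A] [IsNoetherianRing A]
    [IsLocalRing A] [IsAdicComplete (maximalIdeal A) A]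
    (ι : Type u) (N : Submodule A (ι → A))
    (hpure : ∀ (X : Type u) [AddCommGroup X] [Module A X],
      Function.Injective (LinearMap.lTensor X N.subtype)) :
    ∀ (M : Type u) [AddCommGroup M] [Module A M] [IsAdicComplete (maximalIdeal A) M],
      Function.Injective (AdicCompletion.of (maximalIdeal A) (↥N ⊗[A] M)) := by
  intro M _ _ _
  have hH : IsHausdorff (maximalIdeal A) (↥N ⊗[A] M) := by
    constructor
    intro x hx
    have hx' : ∀ n : ℕ,
        x ∈ ((maximalIdeal A) ^ n • ⊤ : Submodule A (↥N ⊗[A] M)) := fun n =>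
      (SModEq.zero).mp (hx n)
    have hy : ∀ n : ℕ, (TensorProduct.comm A ↥N M).toLinearMap x
        ∈ ((maximalIdeal A) ^ n • ⊤ : Submodule A (M ⊗[A] ↥N)) := fun n =>
      mem_smul_top_map (P := ↥N ⊗[A] M) (Q := M ⊗[A] ↥N)
        (TensorProduct.comm A ↥N M).toLinearMap (hx' n)
    have hz : ∀ n : ℕ, N.subtype.lTensor M ((TensorProduct.comm A ↥N M).toLinearMap x)
        ∈ ((maximalIdeal A) ^ n • ⊤ : Submodule A (M ⊗[A] (ι → A))) :=
      fun n => mem_smul_top_map (P := M ⊗[A] ↥N) (Q := M ⊗[A] (ι → A))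
        (N.subtype.lTensor M) (hy n)
    have hgz : TensorProduct.piScalarRightHom A A M ι
        (N.subtype.lTensor M ((TensorProduct.comm A ↥N M).toLinearMap x)) = 0 := by
      funext i
      refine IsHausdorff.haus (inferInstance : IsHausdorff (maximalIdeal A) M) _ fun n => ?_
      rw [SModEq.zero]
      exact mem_smul_top_map (P := M ⊗[A] (ι → A)) (Q := M)
        ((LinearMap.proj i) ∘ₗ TensorProduct.piScalarRightHom A A M ι) (hz n)
    obtain ⟨M', hfin, hsub⟩ := TensorProduct.exists_finite_submodule_left_of_setFinite
      ({N.subtype.lTensor M ((TensorProduct.comm A ↥N M).toLinearMap x)} :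
        Set (M ⊗[A] (ι → A))) (Set.finite_singleton _)
    obtain ⟨z', hz'⟩ := hsub rfl
    have hgz' : TensorProduct.piScalarRightHom A A ↥M' ι z' = 0 := by
      funext i
      apply (Submodule.injective_subtype M')
      rw [← piScalarRightHom_naturality ι M'.subtype z' i, hz', hgz]
      simp
    have hz'0 : z' = 0 := piScalarRightHom_injective_of_finite ↥M' ι (by rw [hgz']; simp)
    have hz0 : N.subtype.lTensor M ((TensorProduct.comm A ↥N M).toLinearMap x) = 0 := by
      rw [← hz', hz'0, map_zero]
    have hy0 : (TensorProduct.comm A ↥N M).toLinearMap x = 0 := hpure M (by rw [hz0, map_zero])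
    have h := congrArg (TensorProduct.comm A ↥N M).symm.toLinearMap hy0
    rw [LinearMap.map_zero] at h
    rwa [show (TensorProduct.comm A ↥N M).symm.toLinearMap
      ((TensorProduct.comm A ↥N M).toLinearMap x) = x from
      (TensorProduct.comm A ↥N M).symm_apply_apply x] at h
  intro a b hab
  have h0 : AdicCompletion.of (maximalIdeal A) (↥N ⊗[A] M) (a - b) = 0 := by
    rw [map_sub, hab, sub_self]
  have hsub0 : a - b = 0 := by
    refine hH.haus' _ fun n => ?_
    rw [SModEq.zero]
    have hcomp : (AdicCompletion.of (maximalIdeal A) (↥N ⊗[A] M) (a - b)).1 n = 0 := by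
      rw [h0]; rfl
    rw [AdicCompletion.of_apply, Submodule.mkQ_apply, Submodule.Quotient.mk_eq_zero] at hcomp
    exact hcomp
  exact sub_eq_zero.mp hsub0
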